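/- Let d ≥ 1 and H ∈ ℕ, and let μ_src and μ_tgt be Borel probability measures on ℝ^d with finite second moments. Then the infimum, over all families (μ_0,…,μ_H) feasible for the dynamic primal LP with source μ_src and target μ_tgt, of the cost ((H+1)/2)·Σ_{h=0}^{H} ∫‖x−y‖² dμ_h(x,y) equals W₂²(μ_src, μ_tgt). -/

import Mathlib

open MeasureTheory ENNReal

/-- The squared Wasserstein-2 distance. -/
noncomputable def W2sq {d : ℕ} (μ ν : Measure (EuclideanSpace ℝ (Fin d))) : ℝ≥0∞ :=
  ⨅ (γ : Measure (EuclideanSpace ℝ (Fin d) × EuclideanSpace ℝ (Fin d)))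
    (_ : IsProbabilityMeasure γ ∧ γ.map Prod.fst = μ ∧ γ.map Prod.snd = ν),
      2⁻¹ * ∫⁻ p, (‖p.1 - p.2‖₊ : ℝ≥0∞) ^ 2 ∂γ

/-- Feasibility for the dynamic primal LP with horizon `H`, source `μsrc`, target `μtgt`. -/
def LPfeasible {d : ℕ} (H : ℕ) (μsrc μtgt : Measure (EuclideanSpace ℝ (Fin d)))
    (μ : Fin (H + 1) → Measure (EuclideanSpace ℝ (Fin d) × EuclideanSpace ℝ (Fin d))) : Prop :=
  (∀ h, IsProbabilityMeasure (μ h)) ∧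
  (μ 0).map Prod.fst = μsrc ∧
  (∀ h : Fin H, (μ h.castSucc).map Prod.snd = (μ h.succ).map Prod.fst) ∧
  (μ (Fin.last H)).map Prod.snd = μtgt

/-- The cost of a family in the dynamic primal LP: `((H+1)/2) Σ_h ∫ ‖x-y‖² dμ_h`. -/
noncomputable def LPcost {d : ℕ} (H : ℕ)
    (μ : Fin (H + 1) → Measure (EuclideanSpace ℝ (Fin d) × EuclideanSpace ℝ (Fin d))) : ℝ≥0∞ :=
  ((H : ℝ≥0∞) + 1) / 2 * ∑ h, ∫⁻ p, (‖p.1 - p.2‖₊ : ℝ≥0∞) ^ 2 ∂(μ h)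

section Aux

open ProbabilityTheory NNReal

variable {d : ℕ}
local notation "X" => EuclideanSpace ℝ (Fin d)

/-- transport cost of a coupling -/
noncomputable def pcost {d : ℕ}
    (γ : Measure (EuclideanSpace ℝ (Fin d) × EuclideanSpace ℝ (Fin d))) : ℝ≥0∞ :=
  ∫⁻ p, (‖p.1 - p.2‖₊ : ℝ≥0∞) ^ 2 ∂γ

lemma meas_norm2 : Measurable (fun p : X × X => (‖p.1 - p.2‖₊ : ℝ≥0∞) ^ 2) := by fun_prop

lemma nnrev (a b : X) : ‖a - b‖₊ = ‖b - a‖₊ := by rw [← neg_sub, nnnorm_neg]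

lemma map_compProd_prod_fst (m : Measure X) [IsProbabilityMeasure m]
    (κ η : Kernel X X) [IsMarkovKernel κ] [IsMarkovKernel η] :
    (m ⊗ₘ (κ ×ₖ η)).map (fun p => p.2.1) = (m ⊗ₘ κ).map Prod.snd := by
  ext s hs
  rw [Measure.map_apply (by fun_prop) hs, Measure.map_apply measurable_snd hs,
    Measure.compProd_apply (measurable_snd.fst hs), Measure.compProd_apply (measurable_snd hs)]
  refine lintegral_congr fun y => ?_
  have : (Prod.mk y ⁻¹' ((fun p : X × (X × X) => p.2.1) ⁻¹' s)) = s ×ˢ Set.univ := by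
    ext q; simp
  rw [this, Kernel.prod_apply, Measure.prod_prod, measure_univ, mul_one]
  congr

lemma map_compProd_prod_snd (m : Measure X) [IsProbabilityMeasure m]
    (κ η : Kernel X X) [IsMarkovKernel κ] [IsMarkovKernel η] :
    (m ⊗ₘ (κ ×ₖ η)).map (fun p => p.2.2) = (m ⊗ₘ η).map Prod.snd := by
  ext s hs
  rw [Measure.map_apply (by fun_prop) hs, Measure.map_apply measurable_snd hs,
    Measure.compProd_apply (measurable_snd.snd hs), Measure.compProd_apply (measurable_snd hs)]
  refine lintegral_congr fun y => ?_
  have : (Prod.mk y ⁻¹' ((fun p : X × (X × X) => p.2.2) ⁻¹' s)) = Set.univ ×ˢ s := by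
    ext q; simp
  rw [this, Kernel.prod_apply, Measure.prod_prod, measure_univ, one_mul]
  congr

/-- Gluing two couplings along a common marginal, with an `L²` triangle inequality. -/
lemma glue (μ ν : Measure (X × X)) [IsProbabilityMeasure μ] [IsProbabilityMeasure ν]
    (hmatch : μ.map Prod.snd = ν.map Prod.fst) :
    ∃ γ : Measure (X × X), IsProbabilityMeasure γ ∧ γ.map Prod.fst = μ.map Prod.fst ∧
      γ.map Prod.snd = ν.map Prod.snd ∧
      (pcost γ) ^ (2⁻¹ : ℝ) ≤ (pcost μ) ^ (2⁻¹ : ℝ) + (pcost ν) ^ (2⁻¹ : ℝ) := by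
  have hswapm : IsProbabilityMeasure (μ.map Prod.swap) :=
    Measure.isProbabilityMeasure_map measurable_swap.aemeasurable
  set κ := (μ.map Prod.swap).condKernel with hκdef
  set η := ν.condKernel with hηdef
  set m := ν.fst with hmdef
  have hfst : (μ.map Prod.swap).fst = m := by
    rw [hmdef, Measure.fst, Measure.fst, Measure.map_map measurable_fst measurable_swap]
    have : (Prod.fst ∘ Prod.swap : X × X → X) = Prod.snd := rfl
    rw [this, hmatch]
  have hκ : m ⊗ₘ κ = μ.map Prod.swap := by
    rw [← hfst]; exact (μ.map Prod.swap).disintegrate _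
  have hη : m ⊗ₘ η = ν := ν.disintegrate _
  set π := m ⊗ₘ (κ ×ₖ η) with hπdef
  have : IsProbabilityMeasure π := by infer_instance
  refine ⟨π.map Prod.snd, Measure.isProbabilityMeasure_map measurable_snd.aemeasurable, ?_, ?_, ?_⟩
  · rw [Measure.map_map measurable_fst measurable_snd]
    have h1 : (Prod.fst ∘ Prod.snd : X × (X × X) → X) = fun p => p.2.1 := rfl
    rw [h1, map_compProd_prod_fst, hκ, Measure.map_map measurable_snd measurable_swap]
    rfl
  · rw [Measure.map_map measurable_snd measurable_snd]
    have h1 : (Prod.snd ∘ Prod.snd : X × (X × X) → X) = fun p => p.2.2 := rfl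
    rw [h1, map_compProd_prod_snd, hη]
  · -- cost bound
    have hcf : ∫⁻ p : X × (X × X), ((‖p.2.1 - p.1‖₊ : ℝ≥0∞)) ^ (2:ℝ) ∂π = pcost μ := by
      simp only [ENNReal.rpow_two]
      rw [hπdef, Measure.lintegral_compProd (by fun_prop)]
      have hr : pcost μ = ∫⁻ q : X × X, (‖q.2 - q.1‖₊ : ℝ≥0∞) ^ 2 ∂(μ.map Prod.swap) := by
        rw [lintegral_map (by fun_prop) measurable_swap]
        exact lintegral_congr fun p => by rw [Prod.snd_swap, Prod.fst_swap, nnrev]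
      rw [hr, ← hκ, Measure.lintegral_compProd (by fun_prop)]
      refine lintegral_congr fun y => ?_
      rw [Kernel.lintegral_prod _ _ _ (by fun_prop)]
      exact lintegral_congr fun x => by simp
    have hcg : ∫⁻ p : X × (X × X), ((‖p.1 - p.2.2‖₊ : ℝ≥0∞)) ^ (2:ℝ) ∂π = pcost ν := by
      simp only [ENNReal.rpow_two]
      rw [hπdef, Measure.lintegral_compProd (by fun_prop)]
      have hr : pcost ν = ∫⁻ y, ∫⁻ z, (‖y - z‖₊ : ℝ≥0∞) ^ 2 ∂η y ∂m := by
        rw [pcost, ← hη, Measure.lintegral_compProd (by fun_prop)]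
      rw [hr]
      refine lintegral_congr fun y => ?_
      rw [Kernel.lintegral_prod _ _ _ (by fun_prop)]
      simp
    have key : (pcost (π.map Prod.snd)) ^ (2⁻¹:ℝ)
        ≤ (∫⁻ p : X × (X × X),
            ((‖p.2.1 - p.1‖₊ : ℝ≥0∞) + (‖p.1 - p.2.2‖₊ : ℝ≥0∞)) ^ (2:ℝ) ∂π) ^ (2⁻¹:ℝ) := by
      refine ENNReal.rpow_le_rpow ?_ (by norm_num)
      rw [pcost, lintegral_map meas_norm2 measurable_snd]
      refine lintegral_mono fun p => ?_
      rw [ENNReal.rpow_two]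
      refine pow_le_pow_left₀ zero_le ?_ 2
      have h3 : ‖p.2.1 - p.2.2‖₊ ≤ ‖p.2.1 - p.1‖₊ + ‖p.1 - p.2.2‖₊ := by
        calc ‖p.2.1 - p.2.2‖₊ = ‖(p.2.1 - p.1) + (p.1 - p.2.2)‖₊ := by rw [sub_add_sub_cancel]
        _ ≤ _ := nnnorm_add_le _ _
      simpa using ENNReal.coe_le_coe.mpr h3
    refine key.trans ?_
    rw [← hcf, ← hcg]
    have := ENNReal.lintegral_Lp_add_le (μ := π)
      (f := fun p : X × (X × X) => (‖p.2.1 - p.1‖₊ : ℝ≥0∞))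
      (g := fun p : X × (X × X) => (‖p.1 - p.2.2‖₊ : ℝ≥0∞))
      (by fun_prop) (by fun_prop) (p := 2) one_le_two
    simpa [one_div] using this

/-- Gluing a chain of couplings. -/
lemma chain (n : ℕ) (μ : Fin (n + 1) → Measure (X × X))
    (hp : ∀ h, IsProbabilityMeasure (μ h))
    (hm : ∀ h : Fin n, (μ h.castSucc).map Prod.snd = (μ h.succ).map Prod.fst) :
    ∃ γ : Measure (X × X), IsProbabilityMeasure γ ∧
      γ.map Prod.fst = (μ 0).map Prod.fst ∧
      γ.map Prod.snd = (μ (Fin.last n)).map Prod.snd ∧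
      (pcost γ) ^ (2⁻¹ : ℝ) ≤ ∑ h, (pcost (μ h)) ^ (2⁻¹ : ℝ) := by
  induction n with
  | zero =>
    exact ⟨μ 0, hp 0, rfl, rfl, by simp⟩
  | succ n ih =>
    obtain ⟨γ₀, hγ₀p, h0fst, h0snd, h0cost⟩ :=
      ih (fun h => μ h.castSucc) (fun h => hp _)
        (fun h => by
          have := hm h.castSucc
          rwa [Fin.succ_castSucc] at this)
    haveI := hγ₀p
    haveI := hp (Fin.last (n + 1))
    have hmatch : γ₀.map Prod.snd = (μ (Fin.last (n + 1))).map Prod.fst := by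
      rw [h0snd]
      have := hm (Fin.last n)
      rwa [Fin.succ_last] at this
    obtain ⟨γ, hγp, hγf, hγs, hγc⟩ := glue γ₀ (μ (Fin.last (n + 1))) hmatch
    refine ⟨γ, hγp, ?_, hγs, ?_⟩
    · rw [hγf, h0fst]
      norm_num
    · refine hγc.trans ?_
      rw [Fin.sum_univ_castSucc]
      exact add_le_add h0cost le_rfl

/-- Cauchy-Schwarz for `ℝ≥0∞` sums. -/
lemma sq_sum_le (m : ℕ) (a : Fin m → ℝ≥0∞) :
    (∑ h, a h) ^ 2 ≤ (m : ℝ≥0∞) * ∑ h, (a h) ^ 2 := by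
  by_cases htop : ∃ h, a h = ⊤
  · obtain ⟨h, hh⟩ := htop
    have h1 : ∑ i, (a i) ^ 2 = ⊤ :=
      ENNReal.sum_eq_top.2 ⟨h, Finset.mem_univ h, by simp [hh]⟩
    have hm : (m : ℝ≥0∞) ≠ 0 := Nat.cast_ne_zero.2 (Fin.pos h).ne'
    rw [h1, ENNReal.mul_top hm]
    exact le_top
  · push_neg at htop
    set b : Fin m → ℝ≥0 := fun h => (a h).toNNReal with hb
    have ha : ∀ h, a h = (b h : ℝ≥0∞) := fun h => (ENNReal.coe_toNNReal (htop h)).symm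
    simp_rw [ha]
    have key : (∑ h, ((b h : ℝ))) ^ 2 ≤ (m : ℝ) * ∑ h, ((b h : ℝ)) ^ 2 := by
      have := sq_sum_le_card_mul_sum_sq (s := Finset.univ) (f := fun h : Fin m => (b h : ℝ))
      simpa using this
    have key2 : (∑ h, b h) ^ 2 ≤ (m : ℝ≥0) * ∑ h, (b h) ^ 2 := by
      rw [← NNReal.coe_le_coe]
      push_cast
      exact key
    calc (∑ h, (b h : ℝ≥0∞)) ^ 2 = (((∑ h, b h) ^ 2 : ℝ≥0) : ℝ≥0∞) := by push_cast; ring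
    _ ≤ (((m : ℝ≥0) * ∑ h, (b h) ^ 2 : ℝ≥0) : ℝ≥0∞) := ENNReal.coe_le_coe.2 key2
    _ = (m : ℝ≥0∞) * ∑ h, ((b h : ℝ≥0∞)) ^ 2 := by push_cast; ring

/-- The displacement interpolation maps. -/
noncomputable def interpT (H : ℕ) (k : ℕ) : X × X → X :=
  fun p => (1 - (k : ℝ) / (H + 1)) • p.1 + ((k : ℝ) / (H + 1)) • p.2

lemma measT (H k : ℕ) : Measurable (interpT (d := d) H k) := by
  unfold interpT; fun_prop

lemma interpT_zero (H : ℕ) : interpT (d := d) H 0 = Prod.fst := by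
  funext p; simp [interpT]

lemma interpT_last (H : ℕ) : interpT (d := d) H (H + 1) = Prod.snd := by
  funext p
  have hne : (H : ℝ) + 1 ≠ 0 := by positivity
  simp only [interpT]
  rw [show ((H + 1 : ℕ) : ℝ) = (H : ℝ) + 1 from by push_cast; ring, div_self hne]
  simp

lemma interpT_sub (H k : ℕ) (p : X × X) :
    interpT H k p - interpT H (k + 1) p = (((H : ℝ) + 1)⁻¹) • (p.1 - p.2) := by
  simp only [interpT]
  push_cast
  match_scalars <;> field_simp <;> ring

/-- From any coupling, a feasible family for the LP whose cost is the coupling's cost. -/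
lemma exists_feasible (H : ℕ) (γ : Measure (X × X)) [IsProbabilityMeasure γ] :
    ∃ μ : Fin (H + 1) → Measure (X × X),
      LPfeasible H (γ.map Prod.fst) (γ.map Prod.snd) μ ∧ LPcost H μ = 2⁻¹ * pcost γ := by
  have measTh : ∀ a b : ℕ, Measurable (fun p : X × X => (interpT H a p, interpT H b p)) :=
    fun a b => (measT H a).prodMk (measT H b)
  set fam : Fin (H + 1) → Measure (X × X) :=
    fun h => γ.map (fun p => (interpT H h.1 p, interpT H (h.1 + 1) p)) with hfam
  have hmapfst : ∀ a b : ℕ,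
      (γ.map (fun p : X × X => (interpT H a p, interpT H b p))).map Prod.fst
        = γ.map (interpT H a) := by
    intro a b; rw [Measure.map_map measurable_fst (measTh a b)]; rfl
  have hmapsnd : ∀ a b : ℕ,
      (γ.map (fun p : X × X => (interpT H a p, interpT H b p))).map Prod.snd
        = γ.map (interpT H b) := by
    intro a b; rw [Measure.map_map measurable_snd (measTh a b)]; rfl
  set A : ℝ≥0∞ := (H : ℝ≥0∞) + 1 with hA
  have hA0 : A ≠ 0 := by simp [hA]
  have hAt : A ≠ ⊤ := by simp [hA]
  have hq : ((‖((H : ℝ) + 1)⁻¹‖₊ : ℝ≥0∞)) = A⁻¹ := by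
    rw [nnnorm_inv]
    rw [show ((H : ℝ) + 1) = ((H + 1 : ℕ) : ℝ) from by push_cast; ring, Real.nnnorm_natCast]
    rw [ENNReal.coe_inv (by exact_mod_cast Nat.succ_ne_zero H)]
    congr 1
    simp [hA]
  have hone : ∀ h : Fin (H + 1), pcost (fam h) = A⁻¹ ^ 2 * pcost γ := by
    intro h
    rw [hfam]
    simp only [pcost]
    rw [lintegral_map meas_norm2 (measTh _ _)]
    have hint : ∀ p : X × X,
        ((‖interpT H h.1 p - interpT H (h.1 + 1) p‖₊ : ℝ≥0∞)) ^ 2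
          = A⁻¹ ^ 2 * (‖p.1 - p.2‖₊ : ℝ≥0∞) ^ 2 := by
      intro p
      rw [interpT_sub H h.1 p, nnnorm_smul, ENNReal.coe_mul, hq]
      ring
    simp_rw [hint]
    rw [lintegral_const_mul _ meas_norm2]
  refine ⟨fam, ⟨fun h => Measure.isProbabilityMeasure_map (measTh _ _).aemeasurable, ?_, ?_, ?_⟩, ?_⟩
  · show (fam 0).map Prod.fst = _
    rw [hfam]
    simp only [Fin.val_zero]
    rw [hmapfst, interpT_zero]
  · intro h
    show (fam h.castSucc).map Prod.snd = (fam h.succ).map Prod.fst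
    rw [hfam]
    simp only [Fin.coe_castSucc, Fin.val_succ]
    rw [hmapsnd, hmapfst]
  · show (fam (Fin.last H)).map Prod.snd = _
    rw [hfam]
    simp only [Fin.val_last]
    rw [hmapsnd, interpT_last]
  · have hsum : ∑ h : Fin (H + 1), pcost (fam h) = A * (A⁻¹ ^ 2 * pcost γ) := by
      rw [Finset.sum_congr rfl (fun h _ => hone h), Finset.sum_const]
      simp only [Finset.card_univ, Fintype.card_fin, nsmul_eq_mul]
      congr 1
      simp [hA]
    have hcost : LPcost H fam = A / 2 * ∑ h : Fin (H + 1), pcost (fam h) := rfl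
    rw [hcost, hsum]
    have hAA : A * A⁻¹ = 1 := ENNReal.mul_inv_cancel hA0 hAt
    calc A / 2 * (A * (A⁻¹ ^ 2 * pcost γ))
        = (A * A⁻¹) * ((A * A⁻¹) * (2⁻¹ * pcost γ)) := by
          rw [div_eq_mul_inv, sq]; ring
      _ = 2⁻¹ * pcost γ := by rw [hAA]; ring

lemma rpow_half_sq (a : ℝ≥0∞) : (a ^ (2⁻¹ : ℝ)) ^ 2 = a := by
  rw [← ENNReal.rpow_two, ← ENNReal.rpow_mul]
  norm_num

end Aux

/-- the optimal value of the dynamic primal LP equals `W₂²(μsrc, μtgt)`. -/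
theorem stmt2 {d : ℕ} (hd : 1 ≤ d) (H : ℕ)
    (μsrc μtgt : Measure (EuclideanSpace ℝ (Fin d)))
    [IsProbabilityMeasure μsrc] [IsProbabilityMeasure μtgt]
    (h2src : ∫⁻ x, (‖x‖₊ : ℝ≥0∞) ^ 2 ∂μsrc ≠ ⊤)
    (h2tgt : ∫⁻ x, (‖x‖₊ : ℝ≥0∞) ^ 2 ∂μtgt ≠ ⊤) :
    (⨅ (μ : Fin (H + 1) → Measure (EuclideanSpace ℝ (Fin d) × EuclideanSpace ℝ (Fin d)))
      (_ : LPfeasible H μsrc μtgt μ), LPcost H μ) = W2sq μsrc μtgt := by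
  apply le_antisymm
  · -- LP inf ≤ W2sq : from any coupling build the interpolation family
    rw [W2sq]
    refine le_iInf fun γ => le_iInf fun hγ => ?_
    obtain ⟨hγp, hγf, hγs⟩ := hγ
    haveI := hγp
    obtain ⟨fam, hfeas, hcost⟩ := exists_feasible H γ
    rw [hγf, hγs] at hfeas
    refine (iInf₂_le fam hfeas).trans ?_
    rw [hcost]
    rfl
  · -- W2sq ≤ LP inf : glue the chain and use Cauchy-Schwarz
    refine le_iInf fun fam => le_iInf fun hfeas => ?_
    obtain ⟨hp, hfst, hmid, hsnd⟩ := hfeas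
    obtain ⟨γ, hγp, hγf, hγs, hγc⟩ := chain H fam hp hmid
    have hW : W2sq μsrc μtgt ≤ 2⁻¹ * pcost γ := by
      rw [W2sq]
      exact iInf₂_le γ ⟨hγp, by rw [hγf, hfst], by rw [hγs, hsnd]⟩
    refine hW.trans ?_
    have h1 : pcost γ ≤ ((H + 1 : ℕ) : ℝ≥0∞) * ∑ h, pcost (fam h) := by
      calc pcost γ = ((pcost γ) ^ (2⁻¹ : ℝ)) ^ 2 := (rpow_half_sq _).symm
        _ ≤ (∑ h, (pcost (fam h)) ^ (2⁻¹ : ℝ)) ^ 2 := pow_le_pow_left₀ zero_le hγc 2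
        _ ≤ ((H + 1 : ℕ) : ℝ≥0∞) * ∑ h, ((pcost (fam h)) ^ (2⁻¹ : ℝ)) ^ 2 :=
            sq_sum_le (H + 1) _
        _ = ((H + 1 : ℕ) : ℝ≥0∞) * ∑ h, pcost (fam h) := by
            congr 1
            exact Finset.sum_congr rfl fun h _ => rpow_half_sq _
    have h2 : LPcost H fam = 2⁻¹ * (((H + 1 : ℕ) : ℝ≥0∞) * ∑ h, pcost (fam h)) := by
      rw [LPcost]
      have : ((H : ℝ≥0∞) + 1) = ((H + 1 : ℕ) : ℝ≥0∞) := by push_cast; ring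
      rw [this, div_eq_mul_inv]
      unfold pcost
      ring
    rw [h2]
    exact mul_le_mul_right h1 _
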